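/- Let S be a commutative semiring and M an S-semimodule. If Z_S(M) = p_1 ∪ ... ∪ p_n where each p_i ∈ Ass_S(M), then Z_{S[X]}(M[X]) = p_1[X] ∪ ... ∪ p_n[X], and each p_i[X] is an associated prime of the S[X]-semimodule M[X]. -/

import Mathlib

/-- The convolution action of a polynomial `f ∈ S[X]` on a "polynomial"
`g ∈ M[X]` (represented as a finitely supported function `ℕ →₀ M`). -/
noncomputable def polyAct {S M : Type*} [CommSemiring S] [AddCommMonoid M] [Module S M]
    (f : Polynomial S) (g : ℕ →₀ M) : ℕ →₀ M :=
  f.sum fun n s => g.sum fun k m => Finsupp.single (n + k) (s • m)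

/-- The annihilator of an element `m` of an `S`-semimodule `M`, as an ideal of `S`. -/
def annElem (S : Type*) {M : Type*} [CommSemiring S] [AddCommMonoid M] [Module S M]
    (m : M) : Ideal S where
  carrier := {s | s • m = 0}
  zero_mem' := zero_smul S m
  add_mem' := fun {a b} ha hb => by
    have : (a + b) • m = a • m + b • m := add_smul a b m
    simp only [Set.mem_setOf_eq] at *
    rw [this, ha, hb, add_zero]
  smul_mem' := fun c s hs => by
    simp only [Set.mem_setOf_eq, smul_eq_mul] at *
    rw [mul_smul, hs, smul_zero]

/-- For an ideal `p` of `S`, the ideal `p[X]` of `S[X]` of the polynomials all of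
whose coefficients lie in `p`. -/
def coeffIdeal {S : Type*} [CommSemiring S] (p : Ideal S) : Ideal (Polynomial S) where
  carrier := {f | ∀ n, f.coeff n ∈ p}
  zero_mem' := fun n => by simp
  add_mem' := fun hf hg n => by
    rw [Polynomial.coeff_add]; exact p.add_mem (hf n) (hg n)
  smul_mem' := fun g f hf n => by
    rw [smul_eq_mul, Polynomial.coeff_mul]
    exact Ideal.sum_mem p fun c _ => p.mul_mem_left _ (hf c.2)

section aux
variable {S M : Type*} [CommSemiring S] [AddCommMonoid M] [Module S M]

lemma polyAct_apply (f : Polynomial S) (g : ℕ →₀ M) (N : ℕ) :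
    polyAct f g N = ∑ x ∈ Finset.HasAntidiagonal.antidiagonal N, f.coeff x.1 • g x.2 := by
  classical
  have h1 : polyAct f g N = ∑ x ∈ f.support ×ˢ g.support,
      (if x.1 + x.2 = N then f.coeff x.1 • g x.2 else 0) := by
    unfold polyAct
    rw [Polynomial.sum, Finset.sum_apply']
    simp_rw [Finsupp.sum, Finset.sum_apply', Finsupp.single_apply]
    rw [Finset.sum_product]
  rw [h1, ← Finset.sum_filter]
  apply Finset.sum_subset
  · intro x hx
    rw [Finset.mem_filter] at hx
    rw [Finset.HasAntidiagonal.mem_antidiagonal]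
    exact hx.2
  · intro x hx hx'
    rw [Finset.HasAntidiagonal.mem_antidiagonal] at hx
    rw [Finset.mem_filter, Finset.mem_product] at hx'
    by_cases h : x.1 ∈ f.support
    · have : x.2 ∉ g.support := fun h2 => hx' ⟨⟨h, h2⟩, hx⟩
      rw [Finsupp.notMem_support_iff.mp this, smul_zero]
    · rw [Polynomial.notMem_support_iff.mp h, zero_smul]

lemma polyAct_smul (f : Polynomial S) (s : S) (g : ℕ →₀ M) :
    polyAct f (s • g) = s • polyAct f g := by
  ext N
  rw [Finsupp.smul_apply, polyAct_apply, polyAct_apply, Finset.smul_sum]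
  refine Finset.sum_congr rfl fun x _ => ?_
  rw [Finsupp.smul_apply, smul_comm]

lemma polyAct_single_zero_apply (f : Polynomial S) (m : M) (N : ℕ) :
    polyAct f (Finsupp.single 0 m) N = f.coeff N • m := by
  rw [polyAct_apply]
  rw [Finset.sum_eq_single (N, 0)]
  · simp
  · intro b hb hne
    rw [Finset.HasAntidiagonal.mem_antidiagonal] at hb
    have : b.2 ≠ 0 := by
      rintro h0
      exact hne (Prod.ext (by omega) h0)
    rw [Finsupp.single_apply, if_neg (by omega), smul_zero]
  · intro h
    simp [Finset.HasAntidiagonal.mem_antidiagonal] at h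

lemma polyAct_single_zero_eq_zero_iff (f : Polynomial S) (m : M) :
    polyAct f (Finsupp.single 0 m) = 0 ↔ ∀ n, f.coeff n • m = 0 := by
  constructor
  · intro h n
    rw [← polyAct_single_zero_apply f m n, h]; rfl
  · intro h
    ext N
    rw [polyAct_single_zero_apply, h]; rfl

lemma annElem_mem {m : M} {s : S} : s ∈ annElem S m ↔ s • m = 0 := Iff.rfl

lemma annElem_subtractive (m : M) {a b : S} (ha : a ∈ annElem S m)
    (hab : a + b ∈ annElem S m) : b ∈ annElem S m := by
  have : (a + b) • m = a • m + b • m := add_smul a b m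
  rw [annElem_mem] at *
  rw [this, ha, zero_add] at hab
  exact hab

lemma mem_coeffIdeal {p : Ideal S} {f : Polynomial S} :
    f ∈ coeffIdeal p ↔ ∀ n, f.coeff n ∈ p := Iff.rfl

/-- Prime avoidance for subtractive primes in a commutative semiring. -/
lemma prime_avoidance : ∀ (n : ℕ) (p : Fin n → Ideal S) (I : Ideal S),
    (∀ i, (p i).IsPrime) → (∀ i, ∀ a b : S, a ∈ p i → a + b ∈ p i → b ∈ p i) →
    (I : Set S) ⊆ ⋃ i, (p i : Set S) → ∃ i, I ≤ p i := by
  intro n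
  induction n with
  | zero =>
    intro p I _ _ hcov
    have := hcov I.zero_mem
    simp at this
  | succ m ih =>
    intro p I hprime hsub hcov
    by_cases hex : ∃ i, (I : Set S) ⊆ ⋃ j, ((p (Fin.succAbove i j) : Ideal S) : Set S)
    · obtain ⟨i, hi⟩ := hex
      obtain ⟨j, hj⟩ := ih (fun j => p (i.succAbove j)) I (fun j => hprime _)
        (fun j => hsub _) hi
      exact ⟨i.succAbove j, hj⟩
    · push_neg at hex
      -- for each i, pick xᵢ ∈ I not in any p k for k ≠ i
      have hx : ∀ i, ∃ x : S, x ∈ I ∧ ∀ k, k ≠ i → x ∉ p k := by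
        intro i
        obtain ⟨x, hxI, hxn⟩ := Set.not_subset.mp (hex i)
        refine ⟨x, hxI, fun k hk hxk => hxn ?_⟩
        obtain ⟨j, hj⟩ := Fin.exists_succAbove_eq hk
        exact Set.mem_iUnion.mpr ⟨j, by rw [hj]; exact hxk⟩
      choose x hxI hxn using hx
      have hxm : ∀ i, x i ∈ p i := by
        intro i
        obtain ⟨k, hk⟩ := Set.mem_iUnion.mp (hcov (hxI i))
        by_cases h : k = i
        · rwa [h] at hk
        · exact absurd hk (hxn i k h)
      rcases m with _ | m
      · -- n = 1
        exact ⟨0, fun a ha => by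
          obtain ⟨k, hk⟩ := Set.mem_iUnion.mp (hcov ha)
          rwa [Fin.eq_zero k] at hk⟩
      · -- n = m + 2 : contradiction
        exfalso
        set T : S := ∏ j : Fin (m + 1), x ((0 : Fin (m + 2)).succAbove j) with hT
        have hT_eq : ∀ j : Fin (m + 1), (0 : Fin (m + 2)).succAbove j = j.succ := fun j =>
          Fin.succAbove_zero ▸ rfl
        have hTI : T ∈ I := by
          rw [hT, Fin.prod_univ_succ]
          exact I.mul_mem_right _ (hxI _)
        have hyI : x 0 + T ∈ I := I.add_mem (hxI 0) hTI
        obtain ⟨k, hk⟩ := Set.mem_iUnion.mp (hcov hyI)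
        by_cases h0 : k = 0
        · subst h0
          have hTp : T ∈ p 0 := hsub 0 _ _ (hxm 0) hk
          have := (Ideal.IsPrime.prod_mem_iff (hp := hprime 0)).mp hTp
          obtain ⟨j, _, hj⟩ := this
          exact hxn _ 0 (by rw [hT_eq j]; exact (Fin.succ_ne_zero j).symm) hj
        · -- k ≠ 0, so T has factor x k ∈ p k
          obtain ⟨j, hj⟩ := Fin.exists_succAbove_eq (h0 : k ≠ (0 : Fin (m+2)))
          have hTp : T ∈ p k := by
            rw [hT, ← Finset.mul_prod_erase _ _ (Finset.mem_univ j), hj]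
            exact (p k).mul_mem_right _ (hxm k)
          have : x 0 ∈ p k := hsub k _ _ hTp (by rwa [add_comm] at hk)
          exact hxn 0 k h0 this

/-- `p[X]` is prime when `p` is prime and subtractive. -/
lemma coeffIdeal_isPrime (p : Ideal S) (hp : p.IsPrime)
    (hsub : ∀ a b : S, a ∈ p → a + b ∈ p → b ∈ p) : (coeffIdeal p).IsPrime := by
  classical
  constructor
  · intro h
    have h1 : (1 : Polynomial S) ∈ coeffIdeal p := h ▸ Submodule.mem_top
    have := h1 0
    rw [Polynomial.coeff_one_zero] at this
    exact hp.ne_top (Ideal.eq_top_of_isUnit_mem _ this isUnit_one)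
  · intro f g hfg
    by_contra hcon
    push_neg at hcon
    obtain ⟨hf, hg⟩ := hcon
    rw [mem_coeffIdeal] at hf hg
    push_neg at hf hg
    have hfe : ∃ i, f.coeff i ∉ p := hf
    have hge : ∃ j, g.coeff j ∉ p := hg
    set i := Nat.find hfe with hi
    set j := Nat.find hge with hj
    have hfi : f.coeff i ∉ p := Nat.find_spec hfe
    have hgj : g.coeff j ∉ p := Nat.find_spec hge
    have hflt : ∀ a < i, f.coeff a ∈ p := fun a ha => by
      by_contra h; exact Nat.find_min hfe ha h
    have hglt : ∀ b < j, g.coeff b ∈ p := fun b hb => by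
      by_contra h; exact Nat.find_min hge hb h
    have hcoef := hfg (i + j)
    rw [Polynomial.coeff_mul] at hcoef
    have hmem : (i, j) ∈ Finset.HasAntidiagonal.antidiagonal (i + j) := by rw [Finset.HasAntidiagonal.mem_antidiagonal]
    rw [← Finset.add_sum_erase _ _ hmem] at hcoef
    have hrest : ∑ x ∈ (Finset.HasAntidiagonal.antidiagonal (i + j)).erase (i, j),
        f.coeff x.1 * g.coeff x.2 ∈ p := by
      refine Ideal.sum_mem p fun x hx => ?_
      rw [Finset.mem_erase, Finset.HasAntidiagonal.mem_antidiagonal] at hx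
      obtain ⟨hne, hsum⟩ := hx
      rcases lt_trichotomy x.1 i with h | h | h
      · exact p.mul_mem_right _ (hflt _ h)
      · exact absurd (Prod.ext h (by omega)) hne
      · exact p.mul_mem_left _ (hglt _ (by omega))
    have : f.coeff i * g.coeff j ∈ p :=
      hsub _ _ hrest (by rwa [add_comm] at hcoef)
    rcases hp.mem_or_mem this with h | h
    · exact hfi h
    · exact hgj h

/-- McCoy-type lemma: a zero-divisor on `M[X]` has all coefficients killing a
common nonzero element of `M`. -/
lemma mccoy {f : Polynomial S} {g : ℕ →₀ M} (hg : g ≠ 0) (hfg : polyAct f g = 0) :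
    ∃ m : M, m ≠ 0 ∧ ∀ i, f.coeff i • m = 0 := by
  classical
  have hP : ∃ e : ℕ, ∃ h : ℕ →₀ M, h ≠ 0 ∧ polyAct f h = 0 ∧ ∀ k, e < k → h k = 0 :=
    ⟨g.support.sup id, g, hg, hfg, fun k hk => by
      rw [← Finsupp.notMem_support_iff]
      intro hmem
      have : k ≤ g.support.sup id := Finset.le_sup (f := id) hmem
      omega⟩
  set e₀ := Nat.find hP with he₀
  obtain ⟨h, hh0, hfh, hbd⟩ := Nat.find_spec hP
  have hhe : h e₀ ≠ 0 := by
    intro hz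
    rcases Nat.eq_zero_or_pos e₀ with h0 | hpos
    · apply hh0
      ext k
      rcases Nat.eq_zero_or_pos k with rfl | hk
      · rw [← h0]; exact hz
      · exact hbd k (by omega)
    · refine Nat.find_min hP (m := e₀ - 1) (by omega) ⟨h, hh0, hfh, fun k hk => ?_⟩
      rcases eq_or_lt_of_le (show e₀ ≤ k by omega) with rfl | hlt
      · exact hz
      · exact hbd k hlt
  -- downward induction: all coefficients of f annihilate h
  have key : ∀ t : ℕ, ∀ i : ℕ, f.natDegree < i + t → f.coeff i • h = 0 := by
    intro t
    induction t with
    | zero =>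
      intro i hi
      rw [Polynomial.coeff_eq_zero_of_natDegree_lt (by omega), zero_smul]
    | succ t iht =>
      intro i hi
      by_cases hcase : f.natDegree < i + t
      · exact iht i hcase
      -- step: first show f.coeff i • h e₀ = 0
      have hstep : f.coeff i • h e₀ = 0 := by
        have hc := congrArg (fun u : ℕ →₀ M => u (i + e₀)) hfh
        simp only [Finsupp.coe_zero, Pi.zero_apply] at hc
        rw [polyAct_apply] at hc
        rw [Finset.sum_eq_single (i, e₀)] at hc
        · exact hc
        · intro b hb hne
          rw [Finset.HasAntidiagonal.mem_antidiagonal] at hb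
          rcases lt_trichotomy b.2 e₀ with hlt | heq | hgt
          · -- b.1 > i
            have hb1 : i < b.1 := by omega
            have h1 := iht b.1 (by omega)
            have := congrArg (fun u : ℕ →₀ M => u b.2) h1
            simpa using this
          · exact absurd (Prod.ext (by omega) heq) hne
          · rw [hbd b.2 hgt, smul_zero]
        · intro hmem
          simp [Finset.HasAntidiagonal.mem_antidiagonal] at hmem
      -- now show f.coeff i • h = 0
      by_contra hne
      have hfh' : polyAct f (f.coeff i • h) = 0 := by
        rw [polyAct_smul, hfh, smul_zero]
      rcases Nat.eq_zero_or_pos e₀ with h0 | hpos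
      · apply hne
        ext k
        rcases Nat.eq_zero_or_pos k with rfl | hk
        · have hz : (f.coeff i • h) e₀ = 0 := by
            rw [Finsupp.smul_apply]; exact hstep
          rw [h0] at hz
          simpa using hz
        · rw [Finsupp.smul_apply, hbd k (by omega), smul_zero]; rfl
      · refine Nat.find_min hP (m := e₀ - 1) (by omega)
          ⟨f.coeff i • h, hne, hfh', fun k hk => ?_⟩
        rw [Finsupp.smul_apply]
        rcases eq_or_lt_of_le (show e₀ ≤ k by omega) with rfl | hlt
        · exact hstep
        · rw [hbd k hlt, smul_zero]
  refine ⟨h e₀, hhe, fun i => ?_⟩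
  have := key (f.natDegree + 1) i (by omega)
  have := congrArg (fun u : ℕ →₀ M => u e₀) this
  simpa using this
end aux

/-- If `Z_S(M) = p₁ ∪ ... ∪ pₙ` with each `pᵢ ∈ Ass_S(M)`, then
`Z_{S[X]}(M[X]) = p₁[X] ∪ ... ∪ pₙ[X]`, and each `pᵢ[X]` is an associated prime of
the `S[X]`-semimodule `M[X]`. -/
theorem zeroDivisors_polyModule {S M : Type*} [CommSemiring S] [AddCommMonoid M] [Module S M]
    {n : ℕ} (p : Fin n → Ideal S)
    (hass : ∀ i, (p i).IsPrime ∧ ∃ m : M, p i = annElem S m)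
    (hZ : {s : S | ∃ m : M, m ≠ 0 ∧ s • m = 0} = ⋃ i, (p i : Set S)) :
    {f : Polynomial S | ∃ g : ℕ →₀ M, g ≠ 0 ∧ polyAct f g = 0} =
        (⋃ i, (coeffIdeal (p i) : Set (Polynomial S))) ∧
      ∀ i, (coeffIdeal (p i)).IsPrime ∧
        ∃ g : ℕ →₀ M, ∀ f : Polynomial S, f ∈ coeffIdeal (p i) ↔ polyAct f g = 0 := by
  classical
  have hsubp : ∀ i, ∀ a b : S, a ∈ p i → a + b ∈ p i → b ∈ p i := by
    intro i a b ha hab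
    obtain ⟨-, m, hm⟩ := hass i
    rw [hm] at ha hab ⊢
    exact annElem_subtractive m ha hab
  constructor
  · apply Set.Subset.antisymm
    · rintro f ⟨g, hg, hfg⟩
      obtain ⟨m, hm0, hm⟩ := mccoy hg hfg
      have hsub' : (annElem S m : Set S) ⊆ ⋃ i, (p i : Set S) := by
        intro s hs
        rw [← hZ]
        exact ⟨m, hm0, hs⟩
      obtain ⟨j, hj⟩ := prime_avoidance n p (annElem S m) (fun i => (hass i).1)
        hsubp hsub'
      exact Set.mem_iUnion.mpr ⟨j, fun N => hj (hm N)⟩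
    · rintro f hf
      obtain ⟨i, hfi⟩ := Set.mem_iUnion.mp hf
      obtain ⟨hp, m, hm⟩ := hass i
      have hm0 : m ≠ 0 := by
        intro h0
        apply hp.ne_top
        rw [hm, h0, Ideal.eq_top_iff_one]
        show (1 : S) • (0 : M) = 0
        simp
      refine ⟨Finsupp.single 0 m, fun hz => hm0 (Finsupp.single_eq_zero.mp hz), ?_⟩
      rw [polyAct_single_zero_eq_zero_iff]
      intro N
      have hN : f.coeff N ∈ p i := hfi N
      rw [hm] at hN
      exact hN
  · intro i
    obtain ⟨hp, m, hm⟩ := hass i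
    refine ⟨coeffIdeal_isPrime _ hp (fun a b ha hab => by
      rw [hm] at ha hab ⊢; exact annElem_subtractive m ha hab),
      Finsupp.single 0 m, fun f => ?_⟩
    rw [mem_coeffIdeal, polyAct_single_zero_eq_zero_iff]
    constructor
    · intro h N
      have := h N
      rw [hm] at this
      exact this
    · intro h N
      rw [hm]
      exact h N
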